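/- Let a > 0 and z ∈ ℂ with Re z < 0, and define R₁(w) = ∑_{k=0}^∞ (-1)^k/(k² + w²) - 1/(2w²) for Re w > 0. Then R₁(w) = π/(2w·sinh(πw)), and consequently |R₁(w) - πe^{-πw}/w| ≤ (π/|w|)·|e^{-πw}|·(2|e^{-2πw}|/(1 - |e^{-2πw}|)) whenever |e^{-2πw}| < 1; in particular R₁(w)·(w/π)·e^{πw} → 1 as Re w → ∞. -/

import Mathlib

open Real Complex Filter



lemma aux_summable_inv (w : ℂ) : Summable (fun n : ℕ => ‖(((n:ℂ)^2 + w^2))⁻¹‖) := by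
  have hs : Summable (fun n : ℕ => 2 * (1/(n:ℝ)^2)) :=
    ((Real.summable_one_div_nat_pow (p := 2)).mpr one_lt_two).mul_left 2
  apply Summable.of_norm_bounded_eventually_nat hs
  filter_upwards [eventually_ge_atTop (⌈Real.sqrt (2*‖w^2‖)⌉₊ + 1)] with n hn
  have hn1 : 1 ≤ n := le_trans (Nat.le_add_left 1 _) hn
  have hsq : 2*‖w^2‖ ≤ (n:ℝ)^2 := by
    have h1 : Real.sqrt (2*‖w^2‖) ≤ (n:ℝ) := by
      calc Real.sqrt (2*‖w^2‖) ≤ (⌈Real.sqrt (2*‖w^2‖)⌉₊ : ℝ) := Nat.le_ceil _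
      _ ≤ (n:ℝ) := by exact_mod_cast le_trans (Nat.le_add_right _ 1) hn
    nlinarith [Real.sq_sqrt (by positivity : (0:ℝ) ≤ 2*‖w^2‖), Real.sqrt_nonneg (2*‖w^2‖)]
  have hre : (n:ℝ)^2/2 ≤ (((n:ℂ)^2 + w^2)).re := by
    have h2 : |(w^2).re| ≤ ‖w^2‖ := Complex.abs_re_le_norm _
    simp only [Complex.add_re]
    rw [show ((n:ℂ)^2).re = (n:ℝ)^2 by rw [show ((n:ℂ)^2) = (((n:ℝ)^2 : ℝ) : ℂ) by push_cast; ring, Complex.ofReal_re]]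
    cases' abs_le.mp h2 with h1 h2'
    nlinarith
  have hpos : (0:ℝ) < (n:ℝ)^2/2 := by positivity
  have hnorm : (n:ℝ)^2/2 ≤ ‖(n:ℂ)^2 + w^2‖ := le_trans hre (Complex.re_le_norm _)
  rw [norm_norm, norm_inv]
  calc ‖(n:ℂ)^2 + w^2‖⁻¹ ≤ ((n:ℝ)^2/2)⁻¹ := by
        apply inv_anti₀ hpos hnorm
    _ = 2 * (1/(n:ℝ)^2) := by field_simp


lemma sq_add_ne (w : ℂ) (hw : 0 < w.re) (n : ℤ) : ((n:ℂ)^2 + w^2) ≠ 0 := by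
  have h5 : (w - ↑n*Complex.I)*(w + ↑n*Complex.I) = (n:ℂ)^2 + w^2 := by
    linear_combination (-(n:ℂ)^2) * Complex.I_sq
  rw [← h5]
  apply mul_ne_zero
  · intro h
    have : (w - n*Complex.I).re = 0 := by rw [h]; simp
    simp [Complex.sub_re, Complex.mul_re] at this
    linarith
  · intro h
    have : (w + n*Complex.I).re = 0 := by rw [h]; simp
    simp [Complex.add_re, Complex.mul_re] at this
    linarith

lemma sinh_ne (w : ℂ) (hw : 0 < w.re) : Complex.sinh ((π:ℂ)*w) ≠ 0 := by
  intro h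
  have h2 : Complex.sin ((π:ℂ)*w*Complex.I) = 0 := by
    rw [Complex.sin_mul_I, h, zero_mul]
  rw [Complex.sin_eq_zero_iff] at h2
  obtain ⟨k, hk⟩ := h2
  have hpi : (π:ℂ) ≠ 0 := Complex.ofReal_ne_zero.mpr Real.pi_ne_zero
  have hwI : w * Complex.I = k := by
    have := mul_left_cancel₀ hpi (by linear_combination hk : (π:ℂ) * (w * Complex.I) = (π:ℂ) * k)
    linear_combination this
  have := congrArg Complex.im hwI
  simp [Complex.mul_im] at this
  linarith


lemma alg (E a b w : ℂ) (hE : E ≠ 0) (ha : a ≠ 0) (hb : b ≠ 0) (hab : a + b = 2*w) :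
    E⁻¹/2 * ((E*E - 1)/a) + E/2 * ((E⁻¹*E⁻¹ - 1)/(-b)) = 2*w*((E - E⁻¹)/2)/(a*b) := by
  have h1 : E⁻¹/2 * ((E*E - 1)/a) = (E - E⁻¹)/(2*a) := by
    rw [div_mul_div_comm]
    rw [div_eq_div_iff (by simp [ha]) (by simp [ha])]
    field_simp
  have h2 : E/2 * ((E⁻¹*E⁻¹ - 1)/(-b)) = (E - E⁻¹)/(2*b) := by
    rw [div_mul_div_comm]
    rw [div_eq_div_iff (by simp [hb]) (by simp [hb])]
    field_simp
    ring
  rw [h1, h2, div_add_div _ _ (by simp [ha]) (by simp [hb])]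
  rw [div_eq_div_iff (by simp [ha, hb]) (by simp [ha, hb])]
  ring_nf
  linear_combination (2*(E - E⁻¹)*a*b) * hab


lemma coeff_int (w : ℂ) (hw : 0 < w.re) (n : ℤ) :
    ∫ x in (0:ℝ)..(2*π), Complex.exp (2*π*Complex.I*(-n)*x/(2*π)) * Complex.cosh (w*((x:ℂ) - (π:ℝ))) =
      2*w*Complex.sinh ((π:ℂ)*w) / ((n:ℂ)^2+w^2) := by
  have hpi : (π:ℂ) ≠ 0 := Complex.ofReal_ne_zero.mpr Real.pi_ne_zero
  have hc1 : w - n*Complex.I ≠ 0 := by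
    intro h
    have : (w - n*Complex.I).re = 0 := by rw [h]; simp
    simp [Complex.sub_re, Complex.mul_re] at this
    linarith
  have hc2 : -w - n*Complex.I ≠ 0 := by
    intro h
    have : (-w - n*Complex.I).re = 0 := by rw [h]; simp
    simp [Complex.sub_re, Complex.mul_re] at this
    linarith
  have hint : ∀ x : ℝ, Complex.exp (2*π*Complex.I*(-n)*x/(2*π)) * Complex.cosh (w*((x:ℂ) - (π:ℝ)))
      = Complex.exp (-(π:ℂ)*w)/2 * Complex.exp ((w - n*Complex.I)*x)
        + Complex.exp ((π:ℂ)*w)/2 * Complex.exp ((-w - n*Complex.I)*x) := by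
    intro x
    have l : Complex.exp (2*π*Complex.I*(-n)*x/(2*π)) * Complex.cosh (w*((x:ℂ) - (π:ℝ)))
        = (Complex.exp (-n*Complex.I*x + w*((x:ℂ) - π)) + Complex.exp (-n*Complex.I*x + -(w*((x:ℂ) - π))))/2 := by
      rw [Complex.cosh, show (2*(π:ℂ)*Complex.I*(-n)*x/(2*π)) = -n*Complex.I*x by field_simp,
        ← mul_div_assoc, mul_add, ← Complex.exp_add, ← Complex.exp_add]
    have r : Complex.exp (-(π:ℂ)*w)/2 * Complex.exp ((w - n*Complex.I)*x)
        + Complex.exp ((π:ℂ)*w)/2 * Complex.exp ((-w - n*Complex.I)*x)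
        = (Complex.exp (-(π:ℂ)*w + (w - n*Complex.I)*x) + Complex.exp ((π:ℂ)*w + (-w - n*Complex.I)*x))/2 := by
      rw [div_mul_eq_mul_div, div_mul_eq_mul_div, ← Complex.exp_add, ← Complex.exp_add, ← add_div]
    rw [l, r]
    congr 2 <;> ring
  rw [intervalIntegral.integral_congr (fun x _ => hint x)]
  rw [intervalIntegral.integral_add, intervalIntegral.integral_const_mul,
      intervalIntegral.integral_const_mul, integral_exp_mul_complex hc1, integral_exp_mul_complex hc2]
  · have he1 : Complex.exp ((w - n*Complex.I)*((2*π:ℝ):ℂ)) = Complex.exp (2*(π:ℂ)*w) := by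
      rw [show ((w - n*Complex.I)*((2*π:ℝ):ℂ)) = 2*(π:ℂ)*w + ((-n:ℤ):ℂ)*(2*π*Complex.I) by push_cast; ring,
        Complex.exp_add, Complex.exp_int_mul_two_pi_mul_I, mul_one]
    have he2 : Complex.exp ((-w - n*Complex.I)*((2*π:ℝ):ℂ)) = Complex.exp (-((π:ℂ)*w) + -((π:ℂ)*w)) := by
      rw [show ((-w - n*Complex.I)*((2*π:ℝ):ℂ)) = (-((π:ℂ)*w) + -((π:ℂ)*w)) + ((-n:ℤ):ℂ)*(2*π*Complex.I) by push_cast; ring,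
        Complex.exp_add ((-((π:ℂ)*w) + -((π:ℂ)*w))), Complex.exp_int_mul_two_pi_mul_I, mul_one]
    have h5 : (w - ↑n*Complex.I)*(w + ↑n*Complex.I) = (n:ℂ)^2 + w^2 := by
      linear_combination (-(n:ℂ)^2) * Complex.I_sq
    rw [he1, he2, show (2*(π:ℂ)*w) = (π:ℂ)*w + (π:ℂ)*w by ring]
    rw [Complex.sinh, ← h5]
    simp only [Complex.ofReal_zero, mul_zero, Complex.exp_zero, Complex.exp_add, Complex.exp_neg,
      neg_mul]
    have hE : Complex.exp ((π:ℂ)*w) ≠ 0 := Complex.exp_ne_zero _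
    have hb : w + ↑n*Complex.I ≠ 0 := by
      intro h; apply hc2
      rw [show -w - ↑n*Complex.I = -(w + ↑n*Complex.I) by ring, h, neg_zero]
    rw [show -w - ↑n*Complex.I = -(w + ↑n*Complex.I) by ring]
    exact alg _ _ _ _ hE hc1 hb (by ring)
  · exact ((Complex.continuous_exp.comp (by continuity)).intervalIntegrable _ _).const_mul _
  · exact ((Complex.continuous_exp.comp (by continuity)).intervalIntegrable _ _).const_mul _


lemma key_hassum (w : ℂ) (hw : 0 < w.re) :
    HasSum (fun n : ℤ => (w * Complex.sinh ((π:ℂ)*w) / π) / ((n:ℂ)^2 + w^2) * (-1:ℂ)^n) 1 := by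
  haveI : Fact (0 < 2*π) := ⟨by positivity⟩
  set g : ℝ → ℂ := fun x => Complex.cosh (w*((x:ℂ) - (π:ℝ))) with hg
  have hgcont : Continuous g := by
    apply Complex.continuous_cosh.comp
    exact continuous_const.mul (Complex.continuous_ofReal.sub continuous_const)
  have hgend : g 0 = g (2*π) := by
    simp only [hg]
    rw [show w*(((0:ℝ):ℂ) - (π:ℝ)) = -(w*(((2*π:ℝ):ℂ) - (π:ℝ))) by push_cast; ring,
      Complex.cosh_neg]
  set G : C(AddCircle (2*π), ℂ) :=
    ⟨AddCircle.liftIco (2*π) 0 g, AddCircle.liftIco_zero_continuous hgend hgcont.continuousOn⟩ with hG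
  have hcoeff : ∀ n : ℤ, fourierCoeff (G : AddCircle (2*π) → ℂ) n
      = (w * Complex.sinh ((π:ℂ)*w) / π) / ((n:ℂ)^2 + w^2) := by
    intro n
    have h1 : fourierCoeff (G : AddCircle (2*π) → ℂ) n
        = fourierCoeffOn (by linarith [Real.pi_pos] : (0:ℝ) < 0 + 2*π) g n :=
      fourierCoeff_liftIco_eq g n
    rw [h1, fourierCoeffOn_eq_integral]
    have h2 : ∀ x : ℝ, (fourier (-n) (x : AddCircle (0+2*π-0))) • g x
        = Complex.exp (2*π*Complex.I*(-n)*x/(2*π)) * Complex.cosh (w*((x:ℂ) - (π:ℝ))) := by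
      intro x
      rw [fourier_coe_apply, smul_eq_mul]
      congr 2
      push_cast
      rw [zero_add, sub_zero]
    rw [show (∫ x in (0:ℝ)..0+2*π, (fourier (-n) (x : AddCircle (0+2*π-0))) • g x)
        = ∫ x in (0:ℝ)..0+2*π, Complex.exp (2*π*Complex.I*(-n)*x/(2*π)) * Complex.cosh (w*((x:ℂ) - (π:ℝ)))
      from intervalIntegral.integral_congr (fun x _ => h2 x)]
    simp only [zero_add, sub_zero]
    rw [coeff_int w hw n]
    rw [Complex.real_smul]
    have hpi : (π:ℂ) ≠ 0 := Complex.ofReal_ne_zero.mpr Real.pi_ne_zero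
    have hne : ((n:ℂ)^2 + w^2) ≠ 0 := sq_add_ne w hw n
    push_cast
    field_simp
  -- summability
  set K : ℂ := w * Complex.sinh ((π:ℂ)*w) / π with hK
  have hsummN : Summable (fun n : ℕ => K / ((n:ℂ)^2 + w^2)) := by
    apply Summable.of_norm
    have := (aux_summable_inv w).mul_left ‖K‖
    apply this.congr
    intro n
    simp [div_eq_mul_inv, norm_mul, norm_inv]
  have hsummZ : Summable (fun n : ℤ => K / ((n:ℂ)^2 + w^2)) := by
    apply Summable.of_nat_of_neg_add_one
    · exact_mod_cast hsummN
    · have : Summable (fun n : ℕ => K / (((n:ℂ)+1)^2 + w^2)) := by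
        have := (summable_nat_add_iff 1).mpr hsummN
        apply this.congr
        intro n
        push_cast
        ring_nf
      apply this.congr
      intro n
      congr 2
      push_cast
      ring
  have hsummC : Summable (fourierCoeff (G : AddCircle (2*π) → ℂ)) := by
    apply hsummZ.congr
    intro n
    exact (hcoeff n).symm
  -- pointwise sum at π
  have hpt := has_pointwise_sum_fourier_series_of_summable (f := G) hsummC ((π:ℝ) : AddCircle (2*π))
  have hGpi : G ((π:ℝ) : AddCircle (2*π)) = 1 := by
    show AddCircle.liftIco (2*π) 0 g ((π:ℝ) : AddCircle (2*π)) = 1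
    rw [AddCircle.liftIco_coe_apply (by constructor <;> [positivity; linarith [Real.pi_pos]])]
    show Complex.cosh (w*(((π:ℝ):ℂ) - (π:ℝ))) = 1
    rw [sub_self, mul_zero, Complex.cosh_zero]
  have hfour : ∀ n : ℤ, (fourier n) (((π:ℝ) : AddCircle (2*π))) = (-1:ℂ)^n := by
    intro n
    rw [fourier_coe_apply]
    rw [show (2*(π:ℂ)*Complex.I*n*π/((2*π:ℝ):ℂ) : ℂ) = n*((π:ℂ)*Complex.I) by
      have hpi : (π:ℂ) ≠ 0 := Complex.ofReal_ne_zero.mpr Real.pi_ne_zero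
      push_cast
      field_simp]
    rw [Complex.exp_int_mul, Complex.exp_pi_mul_I]
  rw [hGpi] at hpt
  apply hpt.congr_fun
  intro n
  rw [hcoeff n, smul_eq_mul, hfour n]


lemma closed_form (w : ℂ) (hw : 0 < w.re) :
    HasSum (fun k : ℕ => ((-1:ℂ))^k / ((k:ℂ)^2 + w^2))
      (1/(2*w^2) + (π:ℂ)/(2*w*Complex.sinh ((π:ℂ)*w))) := by
  have hpi : (π:ℂ) ≠ 0 := Complex.ofReal_ne_zero.mpr Real.pi_ne_zero
  have hw0 : w ≠ 0 := fun h => by simp [h] at hw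
  have hsh := sinh_ne w hw
  set K : ℂ := w * Complex.sinh ((π:ℂ)*w) / π with hK
  have hK0 : K ≠ 0 := by
    rw [hK]; exact div_ne_zero (mul_ne_zero hw0 hsh) hpi
  set h : ℕ → ℂ := fun k => ((-1:ℂ))^k / ((k:ℂ)^2 + w^2) with hh
  have hS : Summable h := by
    apply Summable.of_norm
    apply (aux_summable_inv w).congr
    intro n
    rw [hh]
    simp [div_eq_mul_inv, norm_mul, norm_inv, norm_pow]
  set S : ℂ := ∑' k, h k with hSdef
  have hSsum : HasSum h S := hS.hasSum
  -- ℤ sum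
  set f : ℤ → ℂ := fun n => K / ((n:ℂ)^2 + w^2) * (-1:ℂ)^n with hf
  have h1 : HasSum (fun n : ℕ => f n) (K * S) := by
    apply (hSsum.mul_left K).congr_fun
    intro n
    rw [hf, hh]
    push_cast
    rw [zpow_natCast]
    ring
  have h2 : HasSum (fun n : ℕ => f (-(n+1))) (K * (S - h 0)) := by
    have h3 : HasSum (fun n : ℕ => h (n+1)) (S - h 0) := by
      have := (hasSum_nat_add_iff' 1).mpr hSsum
      simpa using this
    apply ((h3.mul_left K)).congr_fun
    intro n
    rw [hf, hh]
    have e1 : (((-(n+1):ℤ)):ℂ)^2 = ((n:ℂ)+1)^2 := by push_cast; ring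
    have e2 : ((-1:ℂ))^(-(n+1):ℤ) = ((-1:ℂ))^((n:ℕ)+1) := by
      rw [zpow_neg]
      rw [show (((n:ℕ)+1 : ℤ)) = ((n+1:ℕ) : ℤ) by push_cast; ring]
      rw [zpow_natCast]
      rcases Nat.even_or_odd (n+1) with he | ho
      · rw [he.neg_one_pow]; norm_num
      · rw [ho.neg_one_pow]; norm_num
    beta_reduce
    rw [e1, e2]
    push_cast
    ring
  have hZ : HasSum f (K * S + K * (S - h 0)) := HasSum.of_nat_of_neg_add_one h1 h2
  have huniq : K * S + K * (S - h 0) = 1 := hZ.unique (key_hassum w hw)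
  have h0val : h 0 = 1 / w^2 := by rw [hh]; norm_num
  have hSval : S = 1/(2*w^2) + (π:ℂ)/(2*w*Complex.sinh ((π:ℂ)*w)) := by
    rw [h0val] at huniq
    have h6 : K * (2*S - 1/w^2) = 1 := by linear_combination huniq
    have h7 : 2*S - 1/w^2 = K⁻¹ := eq_inv_of_mul_eq_one_right (by linear_combination h6)
    have h8 : K⁻¹ = (π:ℂ)/(w*Complex.sinh ((π:ℂ)*w)) := by
      rw [hK, inv_div]
    rw [h8] at h7
    linear_combination h7/2
  rw [← hSval]
  exact hSsum


lemma alg2 (E w p : ℂ) (hE : E ≠ 0) (hw : w ≠ 0) (h21 : E^2 - 1 ≠ 0) :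
    p/(2*w*((E - E⁻¹)/2)) - p*E⁻¹/w = p*E⁻¹/w * (E⁻¹*E⁻¹/(1 - E⁻¹*E⁻¹)) := by
  have h1 : E - E⁻¹ = E⁻¹*(E^2 - 1) := by field_simp
  have h2 : 1 - E⁻¹*E⁻¹ = E⁻¹*E⁻¹*(E^2 - 1) := by field_simp
  rw [h1, h2]
  field_simp
  ring
lemma alg3 (E w p : ℂ) (hE : E ≠ 0) (hw : w ≠ 0) (hp : p ≠ 0) (h21 : E^2 - 1 ≠ 0) :
    p/(2*w*((E - E⁻¹)/2)) * (w/p) * E = (1 - E⁻¹*E⁻¹)⁻¹ := by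
  have h1 : E - E⁻¹ = E⁻¹*(E^2 - 1) := by field_simp
  have h2 : 1 - E⁻¹*E⁻¹ = E⁻¹*E⁻¹*(E^2 - 1) := by field_simp
  rw [h1, h2]
  field_simp


/-- The remainder `R₁(w) = S₁(w) - 1/(2w²)` of the special function
`S₁(w) = ∑_{k≥0} (-1)^k/(k²+w²)` satisfies `R₁(w) = π/(2w sinh(πw))` for `Re w > 0`;
consequently `|R₁(w) - πe^{-πw}/w| ≤ (π/|w|)|e^{-πw}|·(2|e^{-2πw}|/(1-|e^{-2πw}|))`
whenever `|e^{-2πw}| < 1`, and `R₁(w)(w/π)e^{πw} → 1` as `Re w → ∞`. -/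
theorem stmt18 (a : ℝ) (ha : 0 < a) (z : ℂ) (hz : z.re < 0)
    (R₁ : ℂ → ℂ)
    (hR₁ : ∀ w : ℂ, R₁ w = (∑' k : ℕ, (-1 : ℂ) ^ k / ((k : ℂ) ^ 2 + w ^ 2)) - 1 / (2 * w ^ 2)) :
    (∀ w : ℂ, 0 < w.re →
      R₁ w = (π : ℂ) / (2 * w * Complex.sinh ((π : ℂ) * w)) ∧
      (‖Complex.exp (-2 * (π : ℂ) * w)‖ < 1 →
        ‖R₁ w - (π : ℂ) * Complex.exp (-(π : ℂ) * w) / w‖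
          ≤ (π / ‖w‖) * ‖Complex.exp (-(π : ℂ) * w)‖ *
            (2 * ‖Complex.exp (-2 * (π : ℂ) * w)‖ /
              (1 - ‖Complex.exp (-2 * (π : ℂ) * w)‖)))) ∧
    Tendsto (fun w : ℂ => R₁ w * (w / (π : ℂ)) * Complex.exp ((π : ℂ) * w))
      (Filter.comap Complex.re atTop) (nhds 1) := by
  have hpi : (π:ℂ) ≠ 0 := Complex.ofReal_ne_zero.mpr Real.pi_ne_zero
  -- closed form
  have hcf : ∀ w : ℂ, 0 < w.re → R₁ w = (π : ℂ) / (2 * w * Complex.sinh ((π : ℂ) * w)) := by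
    intro w hw
    rw [hR₁ w, (closed_form w hw).tsum_eq]
    ring
  refine ⟨fun w hw => ⟨hcf w hw, fun hq => ?_⟩, ?_⟩
  · -- the bound
    have hw0 : w ≠ 0 := fun h => by simp [h] at hw
    set E : ℂ := Complex.exp ((π:ℂ)*w) with hE
    have hEne : E ≠ 0 := Complex.exp_ne_zero _
    have he1 : Complex.exp (-(π:ℂ)*w) = E⁻¹ := by
      rw [show (-(π:ℂ)*w) = -((π:ℂ)*w) by ring, Complex.exp_neg]
    have he2 : Complex.exp (-2*(π:ℂ)*w) = E⁻¹*E⁻¹ := by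
      rw [show (-2*(π:ℂ)*w) = -((π:ℂ)*w) + -((π:ℂ)*w) by ring, Complex.exp_add, Complex.exp_neg]
    have hsinh2 : Complex.sinh ((π:ℂ)*w) = (E - E⁻¹)/2 := by
      rw [Complex.sinh, Complex.exp_neg]
    have hsh := sinh_ne w hw
    have hEE : E - E⁻¹ ≠ 0 := by
      intro h; apply hsh; rw [hsinh2, h, zero_div]
    have h1q : (1:ℂ) - Complex.exp (-2*(π:ℂ)*w) ≠ 0 := by
      intro h
      have : Complex.exp (-2*(π:ℂ)*w) = 1 := by linear_combination -h
      rw [this] at hq; simp at hq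
    have heq : R₁ w - (π:ℂ) * Complex.exp (-(π:ℂ)*w) / w
        = ((π:ℂ) * Complex.exp (-(π:ℂ)*w) / w) *
          (Complex.exp (-2*(π:ℂ)*w) / (1 - Complex.exp (-2*(π:ℂ)*w))) := by
      rw [hcf w hw, hsinh2]
      rw [he2] at h1q
      rw [he1, he2]
      have hE21 : E^2 - 1 ≠ 0 := by
        intro h
        apply h1q
        have hE2 : E^2 = 1 := by linear_combination h
        rw [show (1:ℂ) - E⁻¹*E⁻¹ = 1 - (E^2)⁻¹ by rw [← mul_inv, ← pow_two], hE2]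
        norm_num
      exact alg2 E w _ hEne hw0 hE21
    rw [heq]
    rw [norm_mul, norm_div, norm_div, norm_mul, Complex.norm_real, Real.norm_eq_abs,
      abs_of_pos Real.pi_pos]
    have hq1 : (0:ℝ) < 1 - ‖Complex.exp (-2*(π:ℂ)*w)‖ := by linarith
    have hq2 : ‖(1:ℂ) - Complex.exp (-2*(π:ℂ)*w)‖ ≥ 1 - ‖Complex.exp (-2*(π:ℂ)*w)‖ := by
      calc ‖(1:ℂ) - Complex.exp (-2*(π:ℂ)*w)‖ ≥ ‖(1:ℂ)‖ - ‖Complex.exp (-2*(π:ℂ)*w)‖ :=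
            norm_sub_norm_le _ _
        _ = 1 - ‖Complex.exp (-2*(π:ℂ)*w)‖ := by rw [norm_one]
    have hstep : ‖Complex.exp (-2*(π:ℂ)*w)‖ / ‖(1:ℂ) - Complex.exp (-2*(π:ℂ)*w)‖
        ≤ 2 * ‖Complex.exp (-2*(π:ℂ)*w)‖ / (1 - ‖Complex.exp (-2*(π:ℂ)*w)‖) := by
      have h1 : ‖Complex.exp (-2*(π:ℂ)*w)‖ / ‖(1:ℂ) - Complex.exp (-2*(π:ℂ)*w)‖
          ≤ ‖Complex.exp (-2*(π:ℂ)*w)‖ / (1 - ‖Complex.exp (-2*(π:ℂ)*w)‖) := by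
        apply div_le_div_of_nonneg_left (norm_nonneg _) hq1 hq2
      have h2 : ‖Complex.exp (-2*(π:ℂ)*w)‖ / (1 - ‖Complex.exp (-2*(π:ℂ)*w)‖)
          ≤ 2 * ‖Complex.exp (-2*(π:ℂ)*w)‖ / (1 - ‖Complex.exp (-2*(π:ℂ)*w)‖) := by
        apply (div_le_div_iff_of_pos_right hq1).mpr
        nlinarith [norm_nonneg (Complex.exp (-2*(π:ℂ)*w))]
      linarith
    calc π * ‖Complex.exp (-(π:ℂ)*w)‖ / ‖w‖ *
          (‖Complex.exp (-2*(π:ℂ)*w)‖ / ‖(1:ℂ) - Complex.exp (-2*(π:ℂ)*w)‖)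
        ≤ π * ‖Complex.exp (-(π:ℂ)*w)‖ / ‖w‖ *
          (2 * ‖Complex.exp (-2*(π:ℂ)*w)‖ / (1 - ‖Complex.exp (-2*(π:ℂ)*w)‖)) := by
          apply mul_le_mul_of_nonneg_left hstep (by positivity)
      _ = (π / ‖w‖) * ‖Complex.exp (-(π:ℂ)*w)‖ *
          (2 * ‖Complex.exp (-2*(π:ℂ)*w)‖ / (1 - ‖Complex.exp (-2*(π:ℂ)*w)‖)) := by ring
  · -- the limit
    set l := Filter.comap Complex.re atTop with hl
    have hre : Tendsto Complex.re l atTop := tendsto_comap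
    have hq0 : Tendsto (fun w : ℂ => Complex.exp (-2*(π:ℂ)*w)) l (nhds 0) := by
      rw [tendsto_zero_iff_norm_tendsto_zero]
      have : ∀ w : ℂ, ‖Complex.exp (-2*(π:ℂ)*w)‖ = Real.exp (-(2*π*w.re)) := by
        intro w
        rw [Complex.norm_exp]
        congr 1
        simp [Complex.mul_re]
      simp_rw [this]
      apply Real.tendsto_exp_atBot.comp
      apply Filter.Tendsto.comp tendsto_neg_atTop_atBot
      exact Tendsto.const_mul_atTop (by positivity) hre
    have hlim : Tendsto (fun w : ℂ => (1 - Complex.exp (-2*(π:ℂ)*w))⁻¹) l (nhds 1) := by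
      have := ((tendsto_const_nhds (x := (1:ℂ))).sub hq0).inv₀ (by norm_num)
      simpa using this
    apply hlim.congr'
    filter_upwards [hre.eventually (eventually_ge_atTop 1)] with w hw1
    have hw : 0 < w.re := lt_of_lt_of_le zero_lt_one hw1
    have hw0 : w ≠ 0 := fun h => by simp [h] at hw
    set E : ℂ := Complex.exp ((π:ℂ)*w) with hE
    have hEne : E ≠ 0 := Complex.exp_ne_zero _
    have he2 : Complex.exp (-2*(π:ℂ)*w) = E⁻¹*E⁻¹ := by
      rw [show (-2*(π:ℂ)*w) = -((π:ℂ)*w) + -((π:ℂ)*w) by ring, Complex.exp_add, Complex.exp_neg]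
    have hsinh2 : Complex.sinh ((π:ℂ)*w) = (E - E⁻¹)/2 := by
      rw [Complex.sinh, Complex.exp_neg]
    have hsh := sinh_ne w hw
    have hEE : E - E⁻¹ ≠ 0 := by
      intro h; apply hsh; rw [hsinh2, h, zero_div]
    have hq : ‖Complex.exp (-2*(π:ℂ)*w)‖ < 1 := by
      rw [Complex.norm_exp]
      rw [show ((-2*(π:ℂ)*w).re) = -(2*π*w.re) by simp [Complex.mul_re]]
      rw [show (1:ℝ) = Real.exp 0 by rw [Real.exp_zero]]
      apply Real.exp_lt_exp.mpr
      nlinarith [Real.pi_pos]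
    have h1q : (1:ℂ) - Complex.exp (-2*(π:ℂ)*w) ≠ 0 := by
      intro h
      have : Complex.exp (-2*(π:ℂ)*w) = 1 := by linear_combination -h
      rw [this] at hq; simp at hq
    rw [hcf w hw, hsinh2]
    rw [he2] at h1q
    rw [he2]
    have hE21 : E^2 - 1 ≠ 0 := by
      intro h
      apply h1q
      have hE2 : E^2 = 1 := by linear_combination h
      rw [show (1:ℂ) - E⁻¹*E⁻¹ = 1 - (E^2)⁻¹ by rw [← mul_inv, ← pow_two], hE2]
      norm_num
    exact (alg3 E w _ hEne hw0 hpi hE21).symm
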